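/- Under the completely randomized 2² factorial design with N ≥ 2 and n_j ≥ 2 for every j, for each l ∈ {1,2,3} the classic Neymanian variance estimator over-estimates the true sampling variance on average by exactly E[ V̂_N(τ̂_l) ] − Var(τ̂_l) = S²(τ̄_l)/N, where V̂_N(τ̂_l) = (1/4) Σ_{j=1}^4 p̂_j (1 − p̂_j)/(n_j − 1), and the expectation and variance are over the uniform distribution on all treatment assignments with the prescribed group sizes n_1, n_2, n_3, n_4. -/

import Mathlib

open Finset

/-- Contrast vectors of the 2^2 design: rows are h_1, h_2, h_3. -/
def H : Fin 3 → Fin 4 → ℤ :=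
  ![![-1, -1, 1, 1], ![-1, 1, -1, 1], ![1, -1, -1, 1]]

/-- N_j : number of units with Y_i(z_j) = 1. -/
def cnt1 {N : ℕ} (Y : Fin N → Fin 4 → ℕ) (j : Fin 4) : ℕ :=
  (univ.filter fun i => Y i j = 1).card

/-- N_{jj'} : number of units with Y_i(z_j) = Y_i(z_{j'}) = 1. -/
def cnt2 {N : ℕ} (Y : Fin N → Fin 4 → ℕ) (j j' : Fin 4) : ℕ :=
  (univ.filter fun i => Y i j = 1 ∧ Y i j' = 1).card

/-- N_{j j' j''} : triple-intersection counts. -/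
def cnt3 {N : ℕ} (Y : Fin N → Fin 4 → ℕ) (j j' j'' : Fin 4) : ℕ :=
  (univ.filter fun i => Y i j = 1 ∧ Y i j' = 1 ∧ Y i j'' = 1).card

/-- N_{1234} : quadruple-intersection count. -/
def cnt4 {N : ℕ} (Y : Fin N → Fin 4 → ℕ) : ℕ :=
  (univ.filter fun i => Y i 0 = 1 ∧ Y i 1 = 1 ∧ Y i 2 = 1 ∧ Y i 3 = 1).card

/-- Individual factorial effect τ_{il} = (1/2) h_l' Y_i. -/
noncomputable def tauInd {N : ℕ} (Y : Fin N → Fin 4 → ℕ) (l : Fin 3) (i : Fin N) : ℝ :=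
  (1 / 2) * ∑ j, (H l j : ℝ) * (Y i j : ℝ)

/-- Population factorial effect τ̄_l = (1/2) h_l' p, with p_j = N_j / N. -/
noncomputable def taubar {N : ℕ} (Y : Fin N → Fin 4 → ℕ) (l : Fin 3) : ℝ :=
  (1 / 2) * ∑ j, (H l j : ℝ) * ((cnt1 Y j : ℝ) / N)

/-- Variance of the individual factorial effects
    S²(τ̄_l) = (1/(N-1)) Σ_i (τ_{il} - τ̄_l)². -/
noncomputable def S2 {N : ℕ} (Y : Fin N → Fin 4 → ℕ) (l : Fin 3) : ℝ :=
  (1 / ((N : ℝ) - 1)) * ∑ i, (tauInd Y l i - taubar Y l) ^ 2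

/-- J_{l+} = {j : h_{lj} = 1}. -/
def Jplus (l : Fin 3) : Finset (Fin 4) := univ.filter fun j => H l j = 1

/-- J_{l-} = {j : h_{lj} = -1}. -/
def Jminus (l : Fin 3) : Finset (Fin 4) := univ.filter fun j => H l j = -1

/-- All treatment assignments W : {1,…,N} → {1,2,3,4} with #W⁻¹(j) = n_j. -/
def assignments (N : ℕ) (n : Fin 4 → ℕ) : Finset (Fin N → Fin 4) :=
  univ.filter fun W => ∀ j, (univ.filter fun i => W i = j).card = n j

/-- Expectation over the uniform distribution on all assignments. -/
noncomputable def expec {N : ℕ} (n : Fin 4 → ℕ) (f : (Fin N → Fin 4) → ℝ) : ℝ :=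
  (∑ W ∈ assignments N n, f W) / (assignments N n).card

/-- p̂_j = (1/n_j) Σ_{i : W(i) = j} Y_i(z_j). -/
noncomputable def phat {N : ℕ} (Y : Fin N → Fin 4 → ℕ) (n : Fin 4 → ℕ)
    (W : Fin N → Fin 4) (j : Fin 4) : ℝ :=
  (∑ i ∈ univ.filter (fun i => W i = j), (Y i j : ℝ)) / n j

/-- Randomization-based estimator τ̂_l = (1/2) h_l' p̂. -/
noncomputable def tauhat {N : ℕ} (Y : Fin N → Fin 4 → ℕ) (n : Fin 4 → ℕ)
    (l : Fin 3) (W : Fin N → Fin 4) : ℝ :=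
  (1 / 2) * ∑ j, (H l j : ℝ) * phat Y n W j

section
variable {N : ℕ} {n : Fin 4 → ℕ}

lemma mem_assignments_iff {W : Fin N → Fin 4} :
    W ∈ assignments N n ↔ ∀ j, (univ.filter fun i => W i = j).card = n j := by
  simp [assignments]

lemma comp_mem_assignments (σ : Equiv.Perm (Fin N)) {W : Fin N → Fin 4}
    (hW : W ∈ assignments N n) : W ∘ σ ∈ assignments N n := by
  rw [mem_assignments_iff] at hW ⊢
  intro j
  rw [← hW j]
  exact Finset.card_nbij' (fun i => σ i) (fun i => σ.symm i)
    (by intro a ha; simp_all) (by intro a ha; simp_all)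
    (by intro a _; simp) (by intro a _; simp)

lemma sum_assignments_comp {M : Type*} [AddCommMonoid M] (σ : Equiv.Perm (Fin N))
    (f : (Fin N → Fin 4) → M) :
    ∑ W ∈ assignments N n, f (W ∘ σ) = ∑ W ∈ assignments N n, f W := by
  refine Finset.sum_nbij' (fun W => W ∘ σ) (fun W => W ∘ σ.symm) ?_ ?_ ?_ ?_ ?_
  · intro W hW; exact comp_mem_assignments σ hW
  · intro W hW; exact comp_mem_assignments σ.symm hW
  · intro W _; funext i; simp
  · intro W _; funext i; simp
  · intro W _; rfl
end
section
variable {N : ℕ} {n : Fin 4 → ℕ}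

lemma card_one_const (i i' : Fin N) (j : Fin 4) :
    ((assignments N n).filter fun W => W i = j).card
      = ((assignments N n).filter fun W => W i' = j).card := by
  classical
  rw [Finset.card_filter, Finset.card_filter]
  rw [← sum_assignments_comp (n := n) (Equiv.swap i i')
    (fun W => if W i' = j then 1 else 0)]
  refine Finset.sum_congr rfl fun W _ => ?_
  simp [Function.comp, Equiv.swap_apply_right]

lemma count_one (i : Fin N) (j : Fin 4) :
    ((assignments N n).filter fun W => W i = j).card * N
      = (assignments N n).card * n j := by
  classical
  have key : ∑ i' : Fin N, ((assignments N n).filter fun W => W i' = j).card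
      = (assignments N n).card * n j := by
    calc ∑ i' : Fin N, ((assignments N n).filter fun W => W i' = j).card
        = ∑ i' : Fin N, ∑ W ∈ assignments N n, (if W i' = j then 1 else 0) := by
          exact Finset.sum_congr rfl fun i' _ => Finset.card_filter _ _
      _ = ∑ W ∈ assignments N n, ∑ i' : Fin N, (if W i' = j then 1 else 0) :=
          Finset.sum_comm
      _ = ∑ W ∈ assignments N n, n j := by
          refine Finset.sum_congr rfl fun W hW => ?_
          rw [← Finset.card_filter]
          exact (mem_assignments_iff.mp hW) j
      _ = (assignments N n).card * n j := by rw [Finset.sum_const, smul_eq_mul]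
  rw [← key]
  have : ∀ i' : Fin N, ((assignments N n).filter fun W => W i' = j).card
      = ((assignments N n).filter fun W => W i = j).card := fun i' =>
    card_one_const i' i j
  rw [Finset.sum_congr rfl fun i' _ => this i']
  rw [Finset.sum_const, Finset.card_univ, Fintype.card_fin, smul_eq_mul, mul_comm]
end
section
variable {N : ℕ} {n : Fin 4 → ℕ}

lemma exists_perm_pair {i1 i2 i1' i2' : Fin N} (h : i1 ≠ i2) (h' : i1' ≠ i2') :
    ∃ σ : Equiv.Perm (Fin N), σ i1' = i1 ∧ σ i2' = i2 := by
  classical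
  set τ := Equiv.swap i1 i1' with hτ
  have hne : τ i2' ≠ i1 := by
    intro hc
    have : i2' = τ i1 := by
      have := congrArg τ.symm hc
      simpa [hτ, Equiv.symm_apply_apply, Equiv.swap_apply_left] using this
    rw [hτ, Equiv.swap_apply_left] at this
    exact h' this.symm
  refine ⟨τ.trans (Equiv.swap (τ i2') i2), ?_, ?_⟩
  · simp only [Equiv.trans_apply, hτ, Equiv.swap_apply_right]
    exact Equiv.swap_apply_of_ne_of_ne (by simpa [hτ] using hne.symm.symm ∘ Eq.symm) h
  · simp only [Equiv.trans_apply, Equiv.swap_apply_left]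

lemma card_two_const {i1 i2 i1' i2' : Fin N} (h : i1 ≠ i2) (h' : i1' ≠ i2') (j k : Fin 4) :
    ((assignments N n).filter fun W => W i1 = j ∧ W i2 = k).card
      = ((assignments N n).filter fun W => W i1' = j ∧ W i2' = k).card := by
  classical
  obtain ⟨σ, hσ1, hσ2⟩ := exists_perm_pair h h'
  rw [Finset.card_filter, Finset.card_filter]
  rw [← sum_assignments_comp (n := n) σ
    (fun W => if W i1' = j ∧ W i2' = k then 1 else 0)]
  refine Finset.sum_congr rfl fun W _ => ?_
  simp [Function.comp, hσ1, hσ2]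
end
section
variable {N : ℕ} {n : Fin 4 → ℕ}

lemma inner_pair_count (W : Fin N → Fin 4) (hW : W ∈ assignments N n) (j k : Fin 4) :
    ((univ : Finset (Fin N)).offDiag.filter fun p => W p.1 = j ∧ W p.2 = k).card
      = n j * n k - if j = k then n j else 0 := by
  classical
  have hWf := mem_assignments_iff.mp hW
  have hA1 : ((univ ×ˢ univ : Finset (Fin N × Fin N)).filter
      fun p => W p.1 = j ∧ W p.2 = k).card = n j * n k := by
    rw [Finset.filter_product (fun a => W a = j) (fun b => W b = k), Finset.card_product, hWf j, hWf k]
  have hdiag : ((univ ×ˢ univ : Finset (Fin N × Fin N)).filter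
      fun p => (W p.1 = j ∧ W p.2 = k) ∧ p.1 = p.2).card = if j = k then n j else 0 := by
    have himg : ((univ ×ˢ univ : Finset (Fin N × Fin N)).filter
        fun p => (W p.1 = j ∧ W p.2 = k) ∧ p.1 = p.2)
        = (univ.filter fun a => W a = j ∧ W a = k).image (fun a => (a, a)) := by
      ext ⟨a, b⟩
      simp only [Finset.mem_filter, Finset.mem_product, Finset.mem_univ, true_and,
        Finset.mem_image, Prod.mk.injEq]
      constructor
      · rintro ⟨⟨h1, h2⟩, rfl⟩; exact ⟨a, ⟨h1, h2⟩, rfl, rfl⟩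
      · rintro ⟨x, hx, rfl, rfl⟩; exact ⟨hx, rfl⟩
    rw [himg, Finset.card_image_of_injective _ (fun a b hab => (Prod.mk.injEq _ _ _ _).mp hab |>.1)]
    by_cases hjk : j = k
    · subst hjk; simp only [and_self, if_true]; exact hWf j
    · simp only [hjk, if_false]
      rw [Finset.card_eq_zero, Finset.filter_eq_empty_iff]
      rintro a - ⟨h1, h2⟩; exact hjk (h1 ▸ h2 ▸ rfl)
  have hsplit : ((univ : Finset (Fin N)).offDiag.filter fun p => W p.1 = j ∧ W p.2 = k)
      = ((univ ×ˢ univ : Finset (Fin N × Fin N)).filter fun p => W p.1 = j ∧ W p.2 = k)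
        \ ((univ ×ˢ univ : Finset (Fin N × Fin N)).filter
            fun p => (W p.1 = j ∧ W p.2 = k) ∧ p.1 = p.2) := by
    ext ⟨a, b⟩
    simp only [Finset.mem_filter, Finset.mem_offDiag, Finset.mem_univ, true_and,
      Finset.mem_sdiff, Finset.mem_product, and_true]
    tauto
  have hsub : ((univ ×ˢ univ : Finset (Fin N × Fin N)).filter
      fun p => (W p.1 = j ∧ W p.2 = k) ∧ p.1 = p.2)
      ⊆ ((univ ×ˢ univ : Finset (Fin N × Fin N)).filter fun p => W p.1 = j ∧ W p.2 = k) := by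
    intro p hp
    simp only [Finset.mem_filter] at hp ⊢
    exact ⟨hp.1, hp.2.1⟩
  rw [hsplit, Finset.card_sdiff_of_subset hsub, hA1, hdiag]
end
section
variable {N : ℕ} {n : Fin 4 → ℕ}

lemma count_two {i i' : Fin N} (hii : i ≠ i') (j k : Fin 4) :
    ((assignments N n).filter fun W => W i = j ∧ W i' = k).card * (N * (N - 1))
      = (assignments N n).card * (n j * n k - if j = k then n j else 0) := by
  classical
  have key : ∑ p ∈ (univ : Finset (Fin N)).offDiag,
      ((assignments N n).filter fun W => W p.1 = j ∧ W p.2 = k).card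
      = (assignments N n).card * (n j * n k - if j = k then n j else 0) := by
    calc ∑ p ∈ (univ : Finset (Fin N)).offDiag,
        ((assignments N n).filter fun W => W p.1 = j ∧ W p.2 = k).card
        = ∑ p ∈ (univ : Finset (Fin N)).offDiag, ∑ W ∈ assignments N n,
            (if W p.1 = j ∧ W p.2 = k then 1 else 0) := by
          exact Finset.sum_congr rfl fun p _ => Finset.card_filter _ _
      _ = ∑ W ∈ assignments N n, ∑ p ∈ (univ : Finset (Fin N)).offDiag,
            (if W p.1 = j ∧ W p.2 = k then 1 else 0) := Finset.sum_comm
      _ = ∑ W ∈ assignments N n, (n j * n k - if j = k then n j else 0) := by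
          refine Finset.sum_congr rfl fun W hW => ?_
          rw [← Finset.card_filter]
          exact inner_pair_count W hW j k
      _ = (assignments N n).card * (n j * n k - if j = k then n j else 0) := by
          rw [Finset.sum_const, smul_eq_mul]
  rw [← key]
  have hconst : ∀ p ∈ (univ : Finset (Fin N)).offDiag,
      ((assignments N n).filter fun W => W p.1 = j ∧ W p.2 = k).card
        = ((assignments N n).filter fun W => W i = j ∧ W i' = k).card := by
    intro p hp
    rw [Finset.mem_offDiag] at hp
    exact card_two_const hp.2.2 hii j k
  rw [Finset.sum_congr rfl hconst, Finset.sum_const, smul_eq_mul,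
    Finset.offDiag_card, Finset.card_univ, Fintype.card_fin, mul_comm,
    Nat.mul_sub, mul_one]
end
lemma card_filter_interval (N a b : ℕ) (hb : b ≤ N) :
    ((univ : Finset (Fin N)).filter fun i => a ≤ i.val ∧ i.val < b).card = b - a := by
  classical
  rcases Nat.eq_zero_or_pos N with hN0 | hN0
  · subst hN0
    simp only [Finset.univ_eq_empty, Finset.filter_empty, Finset.card_empty]
    omega
  rw [← Nat.card_Ico a b]
  apply Finset.card_nbij' (fun i => i.val) (fun m => ⟨m % N, Nat.mod_lt _ hN0⟩)
  · intro i hi; simp only [Finset.mem_coe, Finset.mem_filter, Finset.mem_univ, true_and] at hi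
    simp only [Finset.mem_coe, Finset.mem_Ico]; omega
  · intro m hm; simp only [Finset.mem_coe, Finset.mem_Ico] at hm
    simp only [Finset.mem_coe, Finset.mem_filter, Finset.mem_univ, true_and]
    have : m % N = m := Nat.mod_eq_of_lt (by omega)
    omega
  · intro i hi; simp only [Finset.mem_coe, Finset.mem_filter, Finset.mem_univ, true_and] at hi
    apply Fin.ext
    have : i.val % N = i.val := Nat.mod_eq_of_lt i.isLt
    simpa using this
  · intro m hm; simp only [Finset.mem_coe, Finset.mem_Ico] at hm
    have : m % N = m := Nat.mod_eq_of_lt (by omega)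
    simpa using this

lemma assignments_nonempty {N : ℕ} {n : Fin 4 → ℕ}
    (h : ∑ j, n j = N) : (assignments N n).Nonempty := by
  classical
  have hs : n 0 + n 1 + n 2 + n 3 = N := by rw [← h, Fin.sum_univ_four]
  set W : Fin N → Fin 4 := fun i => if i.val < n 0 then 0 else if i.val < n 0 + n 1 then 1
    else if i.val < n 0 + n 1 + n 2 then 2 else 3 with hWdef
  refine ⟨W, ?_⟩
  rw [mem_assignments_iff]
  have key : ∀ (a b : ℕ) (jj : Fin 4), b ≤ N → n jj = b - a →
      (∀ i : Fin N, W i = jj ↔ a ≤ i.val ∧ i.val < b) →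
      ((univ : Finset (Fin N)).filter fun i => W i = jj).card = n jj := by
    intro a b jj hb hn hiff
    rw [Finset.filter_congr (fun i _ => hiff i), card_filter_interval N a b hb, hn]
  intro j
  fin_cases j
  · refine key 0 (n 0) 0 (by omega) (by omega) fun i => ?_
    simp only [hWdef]
    split_ifs with h1 h2 h3 <;> simp <;> omega
  · refine key (n 0) (n 0 + n 1) 1 (by omega) (by omega) fun i => ?_
    simp only [hWdef]
    split_ifs with h1 h2 h3 <;> simp <;> omega
  · refine key (n 0 + n 1) (n 0 + n 1 + n 2) 2 (by omega) (by omega) fun i => ?_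
    simp only [hWdef]
    split_ifs with h1 h2 h3 <;> simp <;> omega
  · refine key (n 0 + n 1 + n 2) N 3 (le_refl N) (by omega) fun i => ?_
    have := i.isLt
    simp only [hWdef]
    split_ifs with h1 h2 h3 <;> simp <;> omega
section
variable {N : ℕ} {n : Fin 4 → ℕ}

lemma expec_add (f g : (Fin N → Fin 4) → ℝ) :
    expec n (fun W => f W + g W) = expec n f + expec n g := by
  simp only [expec, Finset.sum_add_distrib, add_div]

lemma expec_sub (f g : (Fin N → Fin 4) → ℝ) :
    expec n (fun W => f W - g W) = expec n f - expec n g := by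
  simp only [expec, Finset.sum_sub_distrib, sub_div]

lemma expec_const_mul (c : ℝ) (f : (Fin N → Fin 4) → ℝ) :
    expec n (fun W => c * f W) = c * expec n f := by
  simp only [expec, ← Finset.mul_sum, mul_div_assoc]

lemma expec_sum {α : Type*} (s : Finset α) (f : α → (Fin N → Fin 4) → ℝ) :
    expec n (fun W => ∑ a ∈ s, f a W) = ∑ a ∈ s, expec n (f a) := by
  simp only [expec, ← Finset.sum_div]
  rw [Finset.sum_comm]

lemma expec_const (hne : (assignments N n).Nonempty) (c : ℝ) :
    expec (N := N) n (fun _ => c) = c := by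
  have : ((assignments N n).card : ℝ) ≠ 0 := by
    simp [Finset.card_ne_zero_of_mem hne.choose_spec]
  rw [expec, Finset.sum_const, nsmul_eq_mul]
  field_simp

lemma expec_var (hne : (assignments N n).Nonempty) (f : (Fin N → Fin 4) → ℝ) :
    expec n (fun W => (f W - expec n f) ^ 2)
      = expec n (fun W => f W ^ 2) - (expec n f) ^ 2 := by
  have h1 : ∀ W, (f W - expec n f) ^ 2
      = f W ^ 2 - (2 * expec n f) * f W + (expec n f) ^ 2 := fun W => by ring
  calc expec n (fun W => (f W - expec n f) ^ 2)
      = expec n (fun W => f W ^ 2 - (2 * expec n f) * f W + (expec n f) ^ 2) := by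
        simp only [h1]
    _ = expec n (fun W => f W ^ 2) - (2 * expec n f) * expec n f + (expec n f) ^ 2 := by
        rw [expec_add, expec_sub, expec_const_mul, expec_const hne]
    _ = expec n (fun W => f W ^ 2) - (expec n f) ^ 2 := by ring

lemma card_one_real (hN : 2 ≤ N) (i : Fin N) (j : Fin 4) :
    (((assignments N n).filter fun W => W i = j).card : ℝ)
      = ((assignments N n).card : ℝ) * n j / N := by
  have hNne : (N : ℝ) ≠ 0 := by positivity
  rw [eq_div_iff hNne]
  exact_mod_cast congrArg (Nat.cast : ℕ → ℝ) (count_one (n := n) i j)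

lemma card_two_real (hN : 2 ≤ N) {i i' : Fin N} (hii : i ≠ i') (j k : Fin 4) :
    (((assignments N n).filter fun W => W i = j ∧ W i' = k).card : ℝ)
      = ((assignments N n).card : ℝ)
          * ((n j : ℝ) * n k - if j = k then (n j : ℝ) else 0) / ((N : ℝ) * ((N : ℝ) - 1)) := by
  have h1 : (2 : ℝ) ≤ (N : ℝ) := by exact_mod_cast hN
  have hNne : (N : ℝ) * ((N : ℝ) - 1) ≠ 0 := by
    have h2 : (0:ℝ) < (N : ℝ) - 1 := by linarith
    have h3 : (0:ℝ) < (N : ℝ) := by linarith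
    positivity
  rw [eq_div_iff hNne]
  have hcast : ((N * (N - 1) : ℕ) : ℝ) = (N : ℝ) * ((N : ℝ) - 1) := by
    push_cast [Nat.cast_sub (by omega : 1 ≤ N)]
    ring
  have hle : (if j = k then n j else 0) ≤ n j * n k := by
    split_ifs with hjk
    · subst hjk
      rcases Nat.eq_zero_or_pos (n j) with h0 | h0
      · simp [h0]
      · exact Nat.le_mul_of_pos_right _ h0
    · exact Nat.zero_le _
  have hcast2 : ((n j * n k - if j = k then n j else 0 : ℕ) : ℝ)
      = (n j : ℝ) * n k - if j = k then (n j : ℝ) else 0 := by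
    rw [Nat.cast_sub hle]
    push_cast
    split_ifs <;> simp
  calc (((assignments N n).filter fun W => W i = j ∧ W i' = k).card : ℝ)
        * ((N : ℝ) * ((N : ℝ) - 1))
      = ((((assignments N n).filter fun W => W i = j ∧ W i' = k).card * (N * (N-1)) : ℕ) : ℝ) := by
        rw [Nat.cast_mul, hcast]
    _ = (((assignments N n).card * (n j * n k - if j = k then n j else 0) : ℕ) : ℝ) := by
        exact_mod_cast congrArg (Nat.cast : ℕ → ℝ) (count_two (n := n) hii j k)
    _ = ((assignments N n).card : ℝ)
          * ((n j : ℝ) * n k - if j = k then (n j : ℝ) else 0) := by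
        rw [Nat.cast_mul, hcast2]
end
section
variable {N : ℕ} {n : Fin 4 → ℕ}

lemma card_real_ne (hsum : ∑ j, n j = N) : ((assignments N n).card : ℝ) ≠ 0 :=
  Nat.cast_ne_zero.mpr (Finset.card_ne_zero_of_mem (assignments_nonempty hsum).choose_spec)

lemma mom1 (hN : 2 ≤ N) (hsum : ∑ j, n j = N) (x : Fin N → ℝ) (j : Fin 4) :
    expec n (fun W => ∑ i ∈ univ.filter (fun i => W i = j), x i)
      = ((n j : ℝ) / N) * ∑ i, x i := by
  have hcA := card_real_ne hsum
  rw [expec]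
  have key : ∑ W ∈ assignments N n, ∑ i ∈ univ.filter (fun i => W i = j), x i
      = ((assignments N n).card : ℝ) * (((n j : ℝ) / N) * ∑ i, x i) := by
    calc ∑ W ∈ assignments N n, ∑ i ∈ univ.filter (fun i => W i = j), x i
        = ∑ W ∈ assignments N n, ∑ i, if W i = j then x i else 0 := by
          refine Finset.sum_congr rfl fun W _ => ?_
          rw [Finset.sum_filter]
      _ = ∑ i, ∑ W ∈ assignments N n, if W i = j then x i else 0 := Finset.sum_comm
      _ = ∑ i : Fin N, (((assignments N n).filter fun W => W i = j).card : ℝ) * x i := by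
          refine Finset.sum_congr rfl fun i _ => ?_
          rw [← Finset.sum_filter, Finset.sum_const, nsmul_eq_mul]
      _ = ∑ i : Fin N, ((assignments N n).card : ℝ) * ((n j : ℝ) / N) * x i := by
          refine Finset.sum_congr rfl fun i _ => ?_
          rw [card_one_real hN i j, mul_div_assoc]
      _ = ((assignments N n).card : ℝ) * (((n j : ℝ) / N) * ∑ i, x i) := by
          rw [← Finset.mul_sum]
          ring
  rw [key]
  exact mul_div_cancel_left₀ _ hcA

lemma mom2 (hN : 2 ≤ N) (hsum : ∑ j, n j = N) (x y : Fin N → ℝ) (j k : Fin 4) :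
    expec n (fun W => (∑ i ∈ univ.filter (fun i => W i = j), x i)
        * (∑ i ∈ univ.filter (fun i => W i = k), y i))
      = (if j = k then ((n j : ℝ) / N) * ∑ i, x i * y i else 0)
        + (((n j : ℝ) * n k - if j = k then (n j : ℝ) else 0) / ((N : ℝ) * ((N : ℝ) - 1)))
            * ((∑ i, x i) * (∑ i, y i) - ∑ i, x i * y i) := by
  classical
  have hcA := card_real_ne hsum
  rw [expec]
  set D : ℝ := (if j = k then ((n j : ℝ) / N) * ∑ i, x i * y i else 0)
        + (((n j : ℝ) * n k - if j = k then (n j : ℝ) else 0) / ((N : ℝ) * ((N : ℝ) - 1)))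
            * ((∑ i, x i) * (∑ i, y i) - ∑ i, x i * y i) with hD
  have key : ∑ W ∈ assignments N n, (∑ i ∈ univ.filter (fun i => W i = j), x i)
        * (∑ i ∈ univ.filter (fun i => W i = k), y i)
      = ((assignments N n).card : ℝ) * D := by
    have step1 : ∀ W : Fin N → Fin 4, (∑ i ∈ univ.filter (fun i => W i = j), x i)
          * (∑ i ∈ univ.filter (fun i => W i = k), y i)
        = ∑ i : Fin N, ∑ i' : Fin N,
            (if W i = j ∧ W i' = k then x i * y i' else 0) := by
      intro W
      rw [Finset.sum_filter, Finset.sum_filter, Finset.sum_mul_sum]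
      refine Finset.sum_congr rfl fun i _ => Finset.sum_congr rfl fun i' _ => ?_
      split_ifs <;> simp_all
    calc ∑ W ∈ assignments N n, (∑ i ∈ univ.filter (fun i => W i = j), x i)
          * (∑ i ∈ univ.filter (fun i => W i = k), y i)
        = ∑ W ∈ assignments N n, ∑ i : Fin N, ∑ i' : Fin N,
            (if W i = j ∧ W i' = k then x i * y i' else 0) := by
          exact Finset.sum_congr rfl fun W _ => step1 W
      _ = ∑ i : Fin N, ∑ i' : Fin N, ∑ W ∈ assignments N n,
            (if W i = j ∧ W i' = k then x i * y i' else 0) := by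
          rw [Finset.sum_comm]
          exact Finset.sum_congr rfl fun i _ => Finset.sum_comm
      _ = ∑ i : Fin N, ∑ i' : Fin N,
            (((assignments N n).filter fun W => W i = j ∧ W i' = k).card : ℝ) * (x i * y i') := by
          refine Finset.sum_congr rfl fun i _ => Finset.sum_congr rfl fun i' _ => ?_
          rw [← Finset.sum_filter, Finset.sum_const, nsmul_eq_mul]
      _ = ((assignments N n).card : ℝ) * D := by
          have hdiag : ∀ i : Fin N,
              (((assignments N n).filter fun W => W i = j ∧ W i = k).card : ℝ)
                = if j = k then ((assignments N n).card : ℝ) * n j / N else 0 := by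
            intro i
            split_ifs with hjk
            · subst hjk
              rw [show ((assignments N n).filter fun W => W i = j ∧ W i = j)
                  = (assignments N n).filter fun W => W i = j by
                    apply Finset.filter_congr; intro W _; simp]
              exact card_one_real hN i j
            · rw [show ((assignments N n).filter fun W => W i = j ∧ W i = k) = ∅ by
                rw [Finset.filter_eq_empty_iff]
                rintro W - ⟨h1, h2⟩
                exact hjk (h1 ▸ h2 ▸ rfl)]
              simp
          have split_i' : ∀ i : Fin N, ∑ i' : Fin N,
              (((assignments N n).filter fun W => W i = j ∧ W i' = k).card : ℝ) * (x i * y i')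
              = (if j = k then ((assignments N n).card : ℝ) * n j / N else 0) * (x i * y i)
                + (((assignments N n).card : ℝ)
                    * ((n j : ℝ) * n k - if j = k then (n j : ℝ) else 0)
                    / ((N : ℝ) * ((N : ℝ) - 1)))
                  * (x i * ((∑ i'', y i'') - y i)) := by
            intro i
            rw [← Finset.add_sum_erase _ _ (Finset.mem_univ i), hdiag i]
            congr 1
            calc ∑ i' ∈ univ.erase i,
                (((assignments N n).filter fun W => W i = j ∧ W i' = k).card : ℝ) * (x i * y i')
                = ∑ i' ∈ univ.erase i,
                    (((assignments N n).card : ℝ)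
                      * ((n j : ℝ) * n k - if j = k then (n j : ℝ) else 0)
                      / ((N : ℝ) * ((N : ℝ) - 1))) * (x i * y i') := by
                  refine Finset.sum_congr rfl fun i' hi' => ?_
                  rw [card_two_real hN (Ne.symm (Finset.ne_of_mem_erase hi')) j k]
              _ = (((assignments N n).card : ℝ)
                      * ((n j : ℝ) * n k - if j = k then (n j : ℝ) else 0)
                      / ((N : ℝ) * ((N : ℝ) - 1))) * (x i * ((∑ i'', y i'') - y i)) := by
                  rw [← Finset.mul_sum, ← Finset.mul_sum, Finset.sum_erase_eq_sub (Finset.mem_univ i)]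
          calc ∑ i : Fin N, ∑ i' : Fin N,
              (((assignments N n).filter fun W => W i = j ∧ W i' = k).card : ℝ) * (x i * y i')
              = ∑ i : Fin N,
                  ((if j = k then ((assignments N n).card : ℝ) * n j / N else 0) * (x i * y i)
                    + (((assignments N n).card : ℝ)
                        * ((n j : ℝ) * n k - if j = k then (n j : ℝ) else 0)
                        / ((N : ℝ) * ((N : ℝ) - 1)))
                      * (x i * ((∑ i'', y i'') - y i))) := by
                exact Finset.sum_congr rfl fun i _ => split_i' i
            _ = ((assignments N n).card : ℝ) * D := by
                rw [Finset.sum_add_distrib, ← Finset.mul_sum, ← Finset.mul_sum, hD]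
                have e1 : ∑ i : Fin N, x i * ((∑ i'', y i'') - y i)
                    = (∑ i, x i) * (∑ i, y i) - ∑ i, x i * y i := by
                  rw [Finset.sum_mul]
                  rw [← Finset.sum_sub_distrib]
                  refine Finset.sum_congr rfl fun i _ => by ring
                rw [e1]
                split_ifs with hjk <;> field_simp <;> ring
  rw [key]
  exact mul_div_cancel_left₀ _ hcA
end
noncomputable def Psum {N : ℕ} (Y : Fin N → Fin 4 → ℕ) (j : Fin 4) : ℝ := ∑ i, (Y i j : ℝ)

noncomputable def Qsum {N : ℕ} (Y : Fin N → Fin 4 → ℕ) (j k : Fin 4) : ℝ :=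
  ∑ i, (Y i j : ℝ) * (Y i k : ℝ)

noncomputable def Fm {N : ℕ} (Y : Fin N → Fin 4 → ℕ) (n : Fin 4 → ℕ) (j k : Fin 4) : ℝ :=
  ((n j : ℝ))⁻¹ * ((n k : ℝ))⁻¹ *
    ((if j = k then ((n j : ℝ) / N) * Qsum Y j k else 0)
      + (((n j : ℝ) * n k - if j = k then (n j : ℝ) else 0) / ((N : ℝ) * ((N : ℝ) - 1)))
          * (Psum Y j * Psum Y k - Qsum Y j k))

section
variable {N : ℕ} {n : Fin 4 → ℕ} {Y : Fin N → Fin 4 → ℕ}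

lemma phat_mom1 (hN : 2 ≤ N) (hsum : ∑ j, n j = N) (hn : ∀ j, 2 ≤ n j) (j : Fin 4) :
    expec n (fun W => phat Y n W j) = Psum Y j / N := by
  have hn0 : (n j : ℝ) ≠ 0 := by
    have := hn j; positivity
  have h1 : (fun W : Fin N → Fin 4 => phat Y n W j)
      = fun W => ((n j : ℝ))⁻¹ * ∑ i ∈ univ.filter (fun i => W i = j), (Y i j : ℝ) := by
    funext W; rw [phat]; ring
  rw [h1, expec_const_mul, mom1 hN hsum (fun i => (Y i j : ℝ)) j, Psum]
  field_simp

lemma phat_mom2 (hN : 2 ≤ N) (hsum : ∑ j, n j = N) (j k : Fin 4) :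
    expec n (fun W => phat Y n W j * phat Y n W k) = Fm Y n j k := by
  have h1 : (fun W : Fin N → Fin 4 => phat Y n W j * phat Y n W k)
      = fun W => ((n j : ℝ))⁻¹ * ((n k : ℝ))⁻¹ *
          ((∑ i ∈ univ.filter (fun i => W i = j), (Y i j : ℝ))
            * (∑ i ∈ univ.filter (fun i => W i = k), (Y i k : ℝ))) := by
    funext W; rw [phat, phat]; ring
  rw [h1, expec_const_mul, mom2 hN hsum (fun i => (Y i j : ℝ)) (fun i => (Y i k : ℝ)) j k,
    Fm, Psum, Psum, Qsum]

lemma etau (hN : 2 ≤ N) (hsum : ∑ j, n j = N) (hn : ∀ j, 2 ≤ n j) (l : Fin 3) :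
    expec n (tauhat Y n l) = (1 / 2) * ∑ j, (H l j : ℝ) * (Psum Y j / N) := by
  rw [show tauhat Y n l = fun W => (1 / 2) * ∑ j, (H l j : ℝ) * phat Y n W j from rfl,
    expec_const_mul, expec_sum]
  congr 1
  refine Finset.sum_congr rfl fun j _ => ?_
  rw [expec_const_mul, phat_mom1 hN hsum hn j]

lemma etau2 (hN : 2 ≤ N) (hsum : ∑ j, n j = N) (l : Fin 3) :
    expec n (fun W => tauhat Y n l W ^ 2)
      = ∑ j, ∑ k, (1 / 4) * ((H l j : ℝ) * (H l k : ℝ)) * Fm Y n j k := by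
  have hexp : (fun W => tauhat Y n l W ^ 2)
      = fun W => ∑ j, ∑ k, ((1 / 4) * ((H l j : ℝ) * (H l k : ℝ)))
          * (phat Y n W j * phat Y n W k) := by
    funext W
    rw [tauhat, mul_pow, sq, sq, Finset.sum_mul_sum, Finset.mul_sum]
    refine Finset.sum_congr rfl fun j _ => ?_
    rw [Finset.mul_sum]
    refine Finset.sum_congr rfl fun k _ => ?_
    ring
  rw [hexp, expec_sum]
  refine Finset.sum_congr rfl fun j _ => ?_
  rw [expec_sum]
  refine Finset.sum_congr rfl fun k _ => ?_
  rw [expec_const_mul, phat_mom2 hN hsum j k]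

lemma eV (hN : 2 ≤ N) (hsum : ∑ j, n j = N) (hn : ∀ j, 2 ≤ n j) :
    expec n (fun W => (1 / 4) * ∑ j, phat Y n W j * (1 - phat Y n W j) / ((n j : ℝ) - 1))
      = (1 / 4) * ∑ j, (Psum Y j / N - Fm Y n j j) / ((n j : ℝ) - 1) := by
  have h1 : (fun W : Fin N → Fin 4 =>
        (1 / 4) * ∑ j, phat Y n W j * (1 - phat Y n W j) / ((n j : ℝ) - 1))
      = fun W => (1 / 4) * ∑ j, (((n j : ℝ) - 1))⁻¹
          * (phat Y n W j - phat Y n W j * phat Y n W j) := by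
    funext W
    congr 1
    refine Finset.sum_congr rfl fun j _ => ?_
    ring
  rw [h1, expec_const_mul, expec_sum]
  congr 1
  refine Finset.sum_congr rfl fun j _ => ?_
  rw [expec_const_mul, expec_sub, phat_mom1 hN hsum hn j, phat_mom2 hN hsum j j]
  ring

lemma cnt1_cast (hY : ∀ i j, Y i j ≤ 1) (j : Fin 4) : (cnt1 Y j : ℝ) = Psum Y j := by
  rw [cnt1, Finset.card_filter, Psum]
  push_cast
  refine Finset.sum_congr rfl fun i _ => ?_
  have := hY i j
  interval_cases h : Y i j <;> simp

lemma qsum_diag (hY : ∀ i j, Y i j ≤ 1) (j : Fin 4) : Qsum Y j j = Psum Y j := by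
  rw [Qsum, Psum]
  refine Finset.sum_congr rfl fun i _ => ?_
  have := hY i j
  interval_cases h : Y i j <;> simp

lemma s2_eq (hN : 2 ≤ N) (hY : ∀ i j, Y i j ≤ 1) (l : Fin 3) :
    S2 Y l = (1 / ((N : ℝ) - 1))
      * ((∑ j, ∑ k, (1 / 4) * ((H l j : ℝ) * (H l k : ℝ)) * Qsum Y j k)
          - N * ((1 / 2) * ∑ j, (H l j : ℝ) * (Psum Y j / N)) ^ 2) := by
  have hN0 : (N : ℝ) ≠ 0 := by positivity
  have hB : taubar Y l = (1 / 2) * ∑ j, (H l j : ℝ) * (Psum Y j / N) := by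
    rw [taubar]
    congr 1
    exact Finset.sum_congr rfl fun j _ => by rw [cnt1_cast hY j]
  have hsum_t : ∑ i, tauInd Y l i = (N : ℝ) * taubar Y l := by
    have l1 : ∑ i, tauInd Y l i = (1 / 2) * ∑ j, (H l j : ℝ) * Psum Y j := by
      simp only [tauInd]
      rw [← Finset.mul_sum, Finset.sum_comm]
      congr 1
      refine Finset.sum_congr rfl fun j _ => ?_
      rw [← Finset.mul_sum, Psum]
    have l2 : ∑ j, (H l j : ℝ) * (Psum Y j / N)
        = (∑ j, (H l j : ℝ) * Psum Y j) / N := by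
      rw [Finset.sum_div]
      exact Finset.sum_congr rfl fun j _ => by ring
    rw [l1, hB, l2]
    field_simp
  have hsq_t : ∑ i, tauInd Y l i ^ 2
      = ∑ j, ∑ k, (1 / 4) * ((H l j : ℝ) * (H l k : ℝ)) * Qsum Y j k := by
    have hexp : ∀ i, tauInd Y l i ^ 2
        = ∑ j, ∑ k, ((1 / 4) * ((H l j : ℝ) * (H l k : ℝ)))
            * ((Y i j : ℝ) * (Y i k : ℝ)) := by
      intro i
      rw [tauInd, mul_pow, sq, sq, Finset.sum_mul_sum, Finset.mul_sum]
      refine Finset.sum_congr rfl fun j _ => ?_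
      rw [Finset.mul_sum]
      refine Finset.sum_congr rfl fun k _ => ?_
      ring
    rw [Finset.sum_congr rfl fun i _ => hexp i, Finset.sum_comm]
    refine Finset.sum_congr rfl fun j _ => ?_
    rw [Finset.sum_comm]
    refine Finset.sum_congr rfl fun k _ => ?_
    rw [← Finset.mul_sum, Qsum]
  have hvar : ∑ i, (tauInd Y l i - taubar Y l) ^ 2
      = ∑ i, tauInd Y l i ^ 2 - (N : ℝ) * taubar Y l ^ 2 := by
    calc ∑ i, (tauInd Y l i - taubar Y l) ^ 2
        = ∑ i, (tauInd Y l i ^ 2 - 2 * taubar Y l * tauInd Y l i + taubar Y l ^ 2) := by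
          refine Finset.sum_congr rfl fun i _ => by ring
      _ = ∑ i, tauInd Y l i ^ 2 - 2 * taubar Y l * ∑ i, tauInd Y l i
            + (N : ℝ) * taubar Y l ^ 2 := by
          rw [Finset.sum_add_distrib, Finset.sum_sub_distrib, ← Finset.mul_sum,
            Finset.sum_const, Finset.card_univ, Fintype.card_fin, nsmul_eq_mul]
      _ = ∑ i, tauInd Y l i ^ 2 - (N : ℝ) * taubar Y l ^ 2 := by
          rw [hsum_t]; ring
  rw [S2, hvar, hsq_t, hB]
end
lemma dsum_comb (F1 F2 F3 : Fin 4 → Fin 4 → ℝ) :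
    (∑ j, ∑ k, F1 j k) - ((∑ j, ∑ k, F2 j k) - (∑ j, ∑ k, F3 j k))
      = ∑ j, ∑ k, (F1 j k - F2 j k + F3 j k) := by
  have h1 : (∑ j, ∑ k, F1 j k) - ((∑ j, ∑ k, F2 j k) - (∑ j, ∑ k, F3 j k))
      = ((∑ j, ∑ k, F1 j k) - (∑ j, ∑ k, F2 j k)) + (∑ j, ∑ k, F3 j k) := by ring
  rw [h1, ← Finset.sum_sub_distrib, ← Finset.sum_add_distrib]
  refine Finset.sum_congr rfl fun j _ => ?_
  rw [← Finset.sum_sub_distrib, ← Finset.sum_add_distrib]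

lemma dsum_scal (a b c : ℝ) (F4 F3 : Fin 4 → Fin 4 → ℝ) :
    a * ((∑ j, ∑ k, F4 j k) - b * (∑ j, ∑ k, F3 j k)) / c
      = ∑ j, ∑ k, a * (F4 j k - b * F3 j k) / c := by
  calc a * ((∑ j, ∑ k, F4 j k) - b * (∑ j, ∑ k, F3 j k)) / c
      = a * (∑ j, ((∑ k, F4 j k) - b * (∑ k, F3 j k))) / c := by
        rw [Finset.mul_sum (f := fun j => ∑ k, F3 j k), ← Finset.sum_sub_distrib]
    _ = a * (∑ j, ∑ k, (F4 j k - b * F3 j k)) / c := by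
        rw [show (∑ j, ((∑ k, F4 j k) - b * (∑ k, F3 j k)))
            = ∑ j, ∑ k, (F4 j k - b * F3 j k) from
          Finset.sum_congr rfl fun j _ => by
            rw [Finset.mul_sum, ← Finset.sum_sub_distrib]]
    _ = ∑ j, ∑ k, a * (F4 j k - b * F3 j k) / c := by
        rw [Finset.mul_sum, Finset.sum_div]
        refine Finset.sum_congr rfl fun j _ => ?_
        rw [Finset.mul_sum, Finset.sum_div]

theorem stmt16 (N : ℕ) (hN : 2 ≤ N) (n : Fin 4 → ℕ) (hn : ∀ j, 2 ≤ n j)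
    (hsum : ∑ j, n j = N) (l : Fin 3)
    (Y : Fin N → Fin 4 → ℕ) (hY : ∀ i j, Y i j ≤ 1) :
    expec n (fun W => (1 / 4) * ∑ j, phat Y n W j * (1 - phat Y n W j) / ((n j : ℝ) - 1))
      - expec n (fun W => (tauhat Y n l W - expec n (tauhat Y n l)) ^ 2)
      = S2 Y l / N := by
  have hne := assignments_nonempty hsum
  have h2N : (2 : ℝ) ≤ (N : ℝ) := by exact_mod_cast hN
  have hN0 : (N : ℝ) ≠ 0 := by linarith
  have hN1 : (N : ℝ) - 1 ≠ 0 := by linarith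
  have hn0 : ∀ j, (n j : ℝ) ≠ 0 := fun j => by
    have : (2 : ℝ) ≤ (n j : ℝ) := by exact_mod_cast hn j
    linarith
  have hn1 : ∀ j, (n j : ℝ) - 1 ≠ 0 := fun j => by
    have : (2 : ℝ) ≤ (n j : ℝ) := by exact_mod_cast hn j
    linarith
  have hH2 : ∀ j, (H l j : ℝ) * (H l j : ℝ) = 1 := by
    intro j
    have h : H l j * H l j = 1 := by revert j; revert l; decide
    exact_mod_cast congrArg (fun z : ℤ => (z : ℝ)) h
  rw [eV hN hsum hn, expec_var hne (tauhat Y n l), etau2 hN hsum l, etau hN hsum hn l,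
    s2_eq hN hY l]
  have hB2 : ((1 / 2) * ∑ j, (H l j : ℝ) * (Psum Y j / N)) ^ 2
      = ∑ j, ∑ k, (1 / 4) * ((H l j : ℝ) * (H l k : ℝ))
          * ((Psum Y j / N) * (Psum Y k / N)) := by
    rw [mul_pow, sq, sq, Finset.sum_mul_sum, Finset.mul_sum]
    refine Finset.sum_congr rfl fun j _ => ?_
    rw [Finset.mul_sum]
    refine Finset.sum_congr rfl fun k _ => ?_
    ring
  rw [hB2]
  have e1 : (1 / 4) * ∑ j, (Psum Y j / N - Fm Y n j j) / ((n j : ℝ) - 1)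
      = ∑ j, ∑ k, (if k = j then
          (1 / 4) * ((Psum Y j / N - Fm Y n j j) / ((n j : ℝ) - 1)) else 0) := by
    rw [Finset.mul_sum]
    refine Finset.sum_congr rfl fun j _ => ?_
    rw [Finset.sum_ite_eq' univ j
      (fun _ => (1 / 4) * ((Psum Y j / N - Fm Y n j j) / ((n j : ℝ) - 1)))]
    simp
  rw [e1, dsum_comb, dsum_scal]
  refine Finset.sum_congr rfl fun j _ => Finset.sum_congr rfl fun k _ => ?_
  by_cases hkj : k = j
  · subst hkj
    rw [if_pos rfl, hH2 k, qsum_diag hY k]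
    simp only [Fm, if_pos rfl, if_true, qsum_diag hY k]
    have h1 := hn0 k
    have h2 := hn1 k
    field_simp
    ring
  · rw [if_neg hkj]
    have hjk : ¬ j = k := fun h => hkj h.symm
    simp only [Fm, if_neg hjk]
    have h1 := hn0 j
    have h2 := hn0 k
    field_simp
    ring
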